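/- Let T be a tree, S a subset of vertices, and x an S-contractible node of T. Then x lies on a path between two S-critical-or-S-boundary nodes, and the maximal path of S-contractible nodes containing x has all internal nodes of degree 2 in the subtree of T induced by non-S-disposable nodes. -/

import Mathlib

/-- `x` lies on the (in a tree, unique) path between `a` and `b`. -/
def OnPath {V : Type*} (G : SimpleGraph V) (a b x : V) : Prop :=
  ∀ p : G.Walk a b, p.IsPath → x ∈ p.support

/-- `x` is `S`-critical: `x = meet(s₁,s₂,s₃)` for some `s₁,s₂,s₃ ∈ S`. -/
def SCritical {V : Type*} (G : SimpleGraph V) (S : Set V) (x : V) : Prop :=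
  ∃ s₁ ∈ S, ∃ s₂ ∈ S, ∃ s₃ ∈ S,
    OnPath G s₁ s₂ x ∧ OnPath G s₂ s₃ x ∧ OnPath G s₁ s₃ x

/-- `x` is `S`-disposable: `x` lies on no path between two vertices of `S`. -/
def SDisposable {V : Type*} (G : SimpleGraph V) (S : Set V) (x : V) : Prop :=
  ∀ s₁ ∈ S, ∀ s₂ ∈ S, ¬ OnPath G s₁ s₂ x

/-- `x` is `S`-contractible: on some path between vertices of `S`, but not critical. -/
def SContractible {V : Type*} (G : SimpleGraph V) (S : Set V) (x : V) : Prop :=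
  (∃ s₁ ∈ S, ∃ s₂ ∈ S, OnPath G s₁ s₂ x) ∧ ¬ SCritical G S x

section Aux

open SimpleGraph Walk

variable {V : Type*} [DecidableEq V] {G : SimpleGraph V}

lemma aux_exists_path (hc : G.Connected) (a b : V) : ∃ p : G.Walk a b, p.IsPath := by
  obtain ⟨w⟩ := hc.preconnected a b
  exact ⟨w.bypass, w.bypass_isPath⟩

/-- If `x` is on the path between `a` and `b`, then for any `c` it is on the path
between `a` and `c` or between `b` and `c`. -/
lemma aux_med {a b x : V} (h : OnPath G a b x) (c : V) :
    OnPath G a c x ∨ OnPath G b c x := by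
  by_contra hcon
  push_neg at hcon
  obtain ⟨h1, h2⟩ := hcon
  unfold OnPath at h1 h2
  push_neg at h1 h2
  obtain ⟨w1, hw1, hx1⟩ := h1
  obtain ⟨w2, hw2, hx2⟩ := h2
  have hmem := h (w1.append w2.reverse).bypass (w1.append w2.reverse).bypass_isPath
  have hsub := (w1.append w2.reverse).support_bypass_subset hmem
  rw [Walk.mem_support_append_iff, Walk.support_reverse, List.mem_reverse] at hsub
  tauto

omit [DecidableEq V] in
lemma aux_onPath_of_mem (hG : G.IsTree) {a b x : V} {p : G.Walk a b} (hp : p.IsPath)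
    (hx : x ∈ p.support) : OnPath G a b x := by
  intro q hq
  have h := hG.2.path_unique ⟨q, hq⟩ ⟨p, hp⟩
  have : q = p := congrArg Subtype.val h
  rw [this]
  exact hx

/-- In a tree, if two walks avoiding `y` start at two distinct neighbours of `y`,
then `y` is on the path between their endpoints. -/
lemma aux_D2 (hG : G.IsTree) {y c d a b : V} (hc : G.Adj y c) (hd : G.Adj y d)
    (hcd : c ≠ d) {u : G.Walk c a} (hu : y ∉ u.support) {v : G.Walk d b}
    (hv : y ∉ v.support) : OnPath G a b y := by
  intro w hw
  by_contra hyw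
  set W := u.append (w.append v.reverse) with hW
  have hWy : y ∉ W.support := by
    rw [hW, Walk.mem_support_append_iff, Walk.mem_support_append_iff,
      Walk.support_reverse, List.mem_reverse]
    tauto
  have hby : y ∉ W.bypass.support := fun h => hWy (W.support_bypass_subset h)
  have hP : (Walk.cons hc.symm (Walk.cons hd Walk.nil)).IsPath := by
    simp [Walk.cons_isPath_iff, hc.ne', hd.ne, hcd]
  have heq := hG.2.path_unique ⟨W.bypass, W.bypass_isPath⟩ ⟨_, hP⟩
  have : W.bypass = Walk.cons hc.symm (Walk.cons hd Walk.nil) :=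
    congrArg Subtype.val heq
  apply hby
  rw [this]
  simp

lemma aux_not_mem_takeUntil {a b : V} {p : G.Walk a b} (hp : p.IsPath)
    {z : V} (hz : z ∈ p.support) (hzb : z ≠ b) : b ∉ (p.takeUntil z hz).support := by
  have hnd : p.support.Nodup := hp.support_nodup
  rw [← p.take_spec hz, Walk.support_append, List.nodup_append'] at hnd
  intro hbmem
  refine hnd.2.2 hbmem ?_
  have hb : b ∈ (p.dropUntil z hz).support := Walk.end_mem_support _
  rw [Walk.support_eq_cons, List.mem_cons] at hb
  rcases hb with h | h
  · exact absurd h.symm hzb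
  · exact h

end Aux

/-- An `S`-contractible node `x` of a tree lies on a path between two nodes that are
`S`-critical or in `S`, and every node of a maximal path of `S`-contractible nodes
(i.e. every `S`-contractible node) has degree exactly 2 in the subtree induced by the
non-`S`-disposable nodes (the union of all paths between vertices of `S`). -/
theorem stmt6 {V : Type*} [Fintype V] (G : SimpleGraph V) (hG : G.IsTree)
    (S : Set V) (x : V) (hx : SContractible G S x) :
    (∃ a b : V, (SCritical G S a ∨ a ∈ S) ∧ (SCritical G S b ∨ b ∈ S) ∧ OnPath G a b x) ∧
      ∀ y : V, SContractible G S y →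
        {z : V | ¬ SDisposable G S z ∧ G.Adj y z}.ncard = 2 := by
  classical
  constructor
  · obtain ⟨⟨s₁, hs₁, s₂, hs₂, hon⟩, _⟩ := hx
    exact ⟨s₁, s₂, Or.inr hs₁, Or.inr hs₂, hon⟩
  · intro y hy
    obtain ⟨⟨s₁, hs₁, s₂, hs₂, hon⟩, hncrit⟩ := hy
    obtain ⟨p, hp⟩ := aux_exists_path hG.1 s₁ s₂
    have hyp : y ∈ p.support := hon p hp
    have hys₁ : y ≠ s₁ := by
      intro h
      exact hncrit ⟨s₁, hs₁, s₁, hs₁, s₂, hs₂,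
        fun q _ => h ▸ q.start_mem_support, hon, hon⟩
    have hys₂ : y ≠ s₂ := by
      intro h
      exact hncrit ⟨s₁, hs₁, s₂, hs₂, s₂, hs₂, hon,
        fun q _ => h ▸ q.start_mem_support, hon⟩
    set q := p.takeUntil y hyp with hqdef
    set r := p.dropUntil y hyp with hrdef
    have hqP : q.IsPath := hp.takeUntil hyp
    have hrP : r.IsPath := hp.dropUntil hyp
    obtain ⟨z₁, h₁, u₁, hu₁⟩ := SimpleGraph.Walk.exists_eq_cons_of_ne hys₁ q.reverse
    obtain ⟨z₂, h₂, u₂, hu₂⟩ := SimpleGraph.Walk.exists_eq_cons_of_ne hys₂ r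
    have hu₁P : u₁.IsPath ∧ y ∉ u₁.support := by
      have : q.reverse.IsPath := hqP.reverse
      rw [hu₁, SimpleGraph.Walk.cons_isPath_iff] at this
      exact this
    have hu₂P : u₂.IsPath ∧ y ∉ u₂.support := by
      have := hrP
      rw [hu₂, SimpleGraph.Walk.cons_isPath_iff] at this
      exact this
    have hz₁q : z₁ ∈ q.support := by
      have : z₁ ∈ q.reverse.support := by
        rw [hu₁]; exact List.mem_cons_of_mem _ u₁.start_mem_support
      rwa [SimpleGraph.Walk.support_reverse, List.mem_reverse] at this
    have hz₂r : z₂ ∈ r.support.tail := by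
      have : r.support = y :: u₂.support := by rw [hu₂, SimpleGraph.Walk.support_cons]
      rw [this]
      exact u₂.start_mem_support
    have hnd : (q.support ++ r.support.tail).Nodup := by
      rw [← SimpleGraph.Walk.support_append, SimpleGraph.Walk.take_spec]
      exact hp.support_nodup
    have hz₁₂ : z₁ ≠ z₂ := by
      intro h
      exact (List.nodup_append'.mp hnd).2.2 hz₁q (h ▸ hz₂r)
    have hset : {z : V | ¬ SDisposable G S z ∧ G.Adj y z} = {z₁, z₂} := by
      ext z
      simp only [Set.mem_setOf_eq, Set.mem_insert_iff, Set.mem_singleton_iff]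
      constructor
      · rintro ⟨hnd', hadj⟩
        by_contra hne
        push_neg at hne
        obtain ⟨hne₁, hne₂⟩ := hne
        unfold SDisposable at hnd'
        push_neg at hnd'
        obtain ⟨t₁, ht₁, t₂, ht₂, hz⟩ := hnd'
        have hzy : z ≠ y := hadj.ne'
        obtain ⟨t, ht, htz⟩ : ∃ t ∈ S, OnPath G t y z := by
          rcases aux_med hz y with h | h
          exacts [⟨t₁, ht₁, h⟩, ⟨t₂, ht₂, h⟩]
        have hty : t ≠ y := by
          rintro rfl
          have := htz SimpleGraph.Walk.nil (SimpleGraph.Walk.IsPath.nil)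
          simp at this
          exact hzy this
        obtain ⟨P, hP⟩ := aux_exists_path hG.1 t y
        have hzP : z ∈ P.support := htz P hP
        have hyt : y ∉ (P.takeUntil z hzP).support :=
          aux_not_mem_takeUntil hP hzP hzy
        have hyt' : y ∉ (P.takeUntil z hzP).reverse.support := by
          rwa [SimpleGraph.Walk.support_reverse, List.mem_reverse]
        have crit1 : OnPath G s₁ t y :=
          aux_D2 hG h₁ hadj (fun h => hne₁ h.symm) hu₁P.2 hyt'
        have crit2 : OnPath G s₂ t y :=
          aux_D2 hG h₂ hadj (fun h => hne₂ h.symm) hu₂P.2 hyt'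
        exact hncrit ⟨s₁, hs₁, s₂, hs₂, t, ht, hon, crit2, crit1⟩
      · intro h
        have hmem : z ∈ p.support := by
          rcases h with rfl | rfl
          · exact SimpleGraph.Walk.support_takeUntil_subset p hyp hz₁q
          · exact SimpleGraph.Walk.support_dropUntil_subset p hyp
              (List.mem_of_mem_tail hz₂r)
        refine ⟨fun hd => hd s₁ hs₁ s₂ hs₂ (aux_onPath_of_mem hG hp hmem), ?_⟩
        rcases h with rfl | rfl
        exacts [h₁, h₂]
    rw [hset]
    exact Set.ncard_pair hz₁₂
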